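/- Let G be a finite connected P6-free graph, v a vertex of G such that N_2(v) induces a complete subgraph, and let x, x' ∈ N_2(v). Let y_1z_1 be an edge inside a connected component Q_i of the induced subgraph G[N_3(v) ∪ N_4(v)] and y_2z_2 an edge inside a connected component Q_j of G[N_3(v) ∪ N_4(v)] with Q_i ≠ Q_j. If x is adjacent to y_1 but not to z_1, and x' is adjacent to y_2 but not to z_2, then x is adjacent to y_2, or x is adjacent to z_2, or x' is adjacent to y_1, or x' is adjacent to z_1. -/

import Mathlib

open SimpleGraph

/-- The `i`-th distance level of a vertex `v`: the set of vertices at distance exactly `i`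
from `v` in `G`. -/
def distLevel {V : Type*} (G : SimpleGraph V) (v : V) (i : ℕ) : Set V :=
  {u : V | G.dist v u = i}

/-- A graph is `P₆`-free if it contains no induced subgraph isomorphic to the chordless
path on 6 vertices. -/
def P6Free {V : Type*} (G : SimpleGraph V) : Prop :=
  ¬ ∃ f : Fin 6 ↪ V, ∀ i j : Fin 6,
      G.Adj (f i) (f j) ↔ ((i : ℕ) + 1 = (j : ℕ) ∨ (j : ℕ) + 1 = (i : ℕ))

/-- `D` is an efficient dominating set of `G`: every vertex is dominated by exactly one
vertex of `D` (a vertex dominates itself and its neighbors). -/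
def IsEDS {V : Type*} (G : SimpleGraph V) (D : Set V) : Prop :=
  ∀ u : V, ∃! d : V, d ∈ D ∧ (d = u ∨ G.Adj d u)

/-- `Q` is (the vertex set of) a connected component of the subgraph of `G` induced by `S`:
`Q` is a nonempty subset of `S`, `Q` induces a connected graph, and `Q` is closed under
adjacency within `S`. -/
def IsCompOf {V : Type*} (G : SimpleGraph V) (S Q : Set V) : Prop :=
  Q ⊆ S ∧ Q.Nonempty ∧ (G.induce Q).Connected ∧
    ∀ x ∈ Q, ∀ y ∈ S, G.Adj x y → y ∈ Q


lemma comp_subset_aux {V : Type*} (G : SimpleGraph V) {S Q Q' : Set V}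
    (h : IsCompOf G S Q) (h' : IsCompOf G S Q') {w : V} (hw : w ∈ Q) (hw' : w ∈ Q') :
    Q ⊆ Q' := by
  obtain ⟨hQS, -, hc, -⟩ := h
  intro u hu
  obtain ⟨p⟩ := hc ⟨w, hw⟩ ⟨u, hu⟩
  suffices H : ∀ (a b : Q) (p : (G.induce Q).Walk a b), (a : V) ∈ Q' → (b : V) ∈ Q' from
    H _ _ p hw'
  intro a b p
  induction p with
  | nil => exact id
  | cons hadj _ ih =>
    intro ha
    exact ih (h'.2.2.2 _ ha _ (hQS (Subtype.mem _)) hadj)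

set_option maxHeartbeats 1000000

/-- In a finite connected `P₆`-free graph in which `N₂(v)` is a clique: if
`x, x' ∈ N₂(v)`, `y₁z₁` is an edge inside a component `Qi` of `G[N₃(v) ∪ N₄(v)]`,
`y₂z₂` is an edge inside a different component `Qj`, `x` is adjacent to `y₁` but not
to `z₁`, and `x'` is adjacent to `y₂` but not to `z₂`, then `x` is adjacent to `y₂`
or to `z₂`, or `x'` is adjacent to `y₁` or to `z₁`. -/
theorem stmt_7 {V : Type*} [Fintype V] (G : SimpleGraph V) (hconn : G.Connected)
    (hP6 : P6Free G) (v : V) (hclique : G.IsClique (distLevel G v 2))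
    (x x' : V) (hx : x ∈ distLevel G v 2) (hx' : x' ∈ distLevel G v 2)
    (Qi Qj : Set V)
    (hQi : IsCompOf G (distLevel G v 3 ∪ distLevel G v 4) Qi)
    (hQj : IsCompOf G (distLevel G v 3 ∪ distLevel G v 4) Qj)
    (hne : Qi ≠ Qj)
    (y₁ z₁ : V) (hy₁ : y₁ ∈ Qi) (hz₁ : z₁ ∈ Qi) (he₁ : G.Adj y₁ z₁)
    (y₂ z₂ : V) (hy₂ : y₂ ∈ Qj) (hz₂ : z₂ ∈ Qj) (he₂ : G.Adj y₂ z₂)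
    (hxy₁ : G.Adj x y₁) (hxz₁ : ¬ G.Adj x z₁)
    (hx'y₂ : G.Adj x' y₂) (hx'z₂ : ¬ G.Adj x' z₂) :
    G.Adj x y₂ ∨ G.Adj x z₂ ∨ G.Adj x' y₁ ∨ G.Adj x' z₁ := by
  by_contra hcon
  push_neg at hcon
  obtain ⟨h1, h2, h3, h4⟩ := hcon
  set S := distLevel G v 3 ∪ distLevel G v 4 with hS
  -- components are disjoint
  have hdisj : ∀ a, a ∈ Qi → a ∈ Qj → False := by
    intro a ha ha'
    exact hne (le_antisymm (comp_subset_aux G hQi hQj ha ha')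
      (comp_subset_aux G hQj hQi ha' ha))
  -- no edges between components
  have hcross : ∀ a ∈ Qi, ∀ b ∈ Qj, ¬ G.Adj a b := by
    intro a ha b hb hab
    exact hdisj b (hQi.2.2.2 a ha b (hQj.1 hb) hab) hb
  -- level-2 vertices differ from S vertices
  have hlev : ∀ a, a ∈ S → ∀ b, b ∈ distLevel G v 2 → a ≠ b := by
    rintro a (ha | ha) b hb rfl <;>
      simp only [distLevel, Set.mem_setOf_eq] at ha hb <;> omega
  have hxS : ∀ a, a ∈ S → a ≠ x ∧ a ≠ x' := fun a ha => ⟨hlev a ha x hx, hlev a ha x' hx'⟩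
  have hy₁S := hQi.1 hy₁; have hz₁S := hQi.1 hz₁
  have hy₂S := hQj.1 hy₂; have hz₂S := hQj.1 hz₂
  have hxx' : x ≠ x' := by rintro rfl; exact h1 hx'y₂
  have hadjxx' : G.Adj x x' := hclique hx hx' hxx'
  -- the induced P6: z₁ y₁ x x' y₂ z₂
  refine hP6 ⟨⟨![z₁, y₁, x, x', y₂, z₂], ?_⟩, ?_⟩
  · intro i j hij
    have d1 : z₁ ≠ y₁ := he₁.ne'
    obtain ⟨d2a, d2b⟩ := hxS z₁ hz₁S
    have d3 : z₁ ≠ y₂ := fun h => hdisj z₁ hz₁ (h ▸ hy₂)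
    have d4 : z₁ ≠ z₂ := fun h => hdisj z₁ hz₁ (h ▸ hz₂)
    obtain ⟨d5a, d5b⟩ := hxS y₁ hy₁S
    have d6 : y₁ ≠ y₂ := fun h => hdisj y₁ hy₁ (h ▸ hy₂)
    have d7 : y₁ ≠ z₂ := fun h => hdisj y₁ hy₁ (h ▸ hz₂)
    obtain ⟨d8a, d8b⟩ := hxS y₂ hy₂S
    obtain ⟨d9a, d9b⟩ := hxS z₂ hz₂S
    have d10 : y₂ ≠ z₂ := he₂.ne
    fin_cases i <;> fin_cases j <;>
      simp only [Matrix.cons_val_zero, Matrix.cons_val_one, Matrix.head_cons,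
        Matrix.cons_val_two, Matrix.tail_cons, Matrix.cons_val_three,
        Matrix.cons_val_four, Matrix.cons_val_succ, Matrix.cons_val_fin_one] at hij <;>
      first
        | rfl
        | (exact absurd hij (by assumption))
        | (exact absurd hij.symm (by assumption))
  · intro i j
    have a1 : G.Adj z₁ y₁ := he₁.symm
    have a2 : ¬ G.Adj z₁ x := fun h => hxz₁ h.symm
    have a3 : ¬ G.Adj z₁ x' := fun h => h4 h.symm
    have a4 : ¬ G.Adj z₁ y₂ := hcross z₁ hz₁ y₂ hy₂
    have a5 : ¬ G.Adj z₁ z₂ := hcross z₁ hz₁ z₂ hz₂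
    have a6 : G.Adj y₁ x := hxy₁.symm
    have a7 : ¬ G.Adj y₁ x' := fun h => h3 h.symm
    have a8 : ¬ G.Adj y₁ y₂ := hcross y₁ hy₁ y₂ hy₂
    have a9 : ¬ G.Adj y₁ z₂ := hcross y₁ hy₁ z₂ hz₂
    have a10 : G.Adj x' y₂ := hx'y₂
    have a11 : G.Adj y₂ z₂ := he₂
    have s1 : ¬ G.Adj y₂ z₁ := fun h => a4 h.symm
    have s2 : ¬ G.Adj z₂ z₁ := fun h => a5 h.symm
    have s3 : ¬ G.Adj x' y₁ := h3
    have s4 : ¬ G.Adj y₂ y₁ := fun h => a8 h.symm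
    have s5 : ¬ G.Adj z₂ y₁ := fun h => a9 h.symm
    have s6 : G.Adj x' x := hadjxx'.symm
    have s7 : ¬ G.Adj y₂ x := fun h => h1 h.symm
    have s8 : ¬ G.Adj z₂ x := fun h => h2 h.symm
    have s9 : G.Adj y₂ x' := hx'y₂.symm
    have s10 : ¬ G.Adj z₂ x' := fun h => hx'z₂ h.symm
    have s11 : G.Adj z₂ y₂ := he₂.symm
    have n1 : ¬ G.Adj z₁ z₁ := G.loopless.irrefl z₁
    have n2 : ¬ G.Adj y₁ y₁ := G.loopless.irrefl y₁
    have n3 : ¬ G.Adj x x := G.loopless.irrefl x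
    have n4 : ¬ G.Adj x' x' := G.loopless.irrefl x'
    have n5 : ¬ G.Adj y₂ y₂ := G.loopless.irrefl y₂
    have n6 : ¬ G.Adj z₂ z₂ := G.loopless.irrefl z₂
    fin_cases i <;> fin_cases j <;>
      simp only [Function.Embedding.coeFn_mk, Matrix.cons_val_zero, Matrix.cons_val_one,
        Matrix.head_cons, Matrix.cons_val_two, Matrix.tail_cons, Matrix.cons_val_three,
        Matrix.cons_val_four, Matrix.cons_val_succ, Matrix.cons_val_fin_one] <;>
      first
        | exact iff_of_true (by assumption) (by decide)
        | exact iff_of_false (by assumption) (by decide)
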